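/- The convolution product of two recurrence matrices is a recurrence matrix, where (A∗B)[U,W] = ∑ A[U₁,W₁]B[U₂,W₂], the sum over all factorizations (U,W) = (U₁,W₁)(U₂,W₂) in the free monoid M_{p×q}. -/

import Mathlib

/-- The free monoid `M_{p×q}` of pairs of equal-length words. -/
def EqPair (p q : ℕ) : Type :=
  {x : List (Fin p) × List (Fin q) // x.1.length = x.2.length}

/-- The single-letter shift operator `ρ(s,t)`: `(ρ(s,t)A)[U,W] = A[Us,Wt]`. -/
def shiftL (p q : ℕ) (K : Type*) [Field K] (s : Fin p) (t : Fin q) :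
    (EqPair p q → K) →ₗ[K] (EqPair p q → K) where
  toFun A := fun x => A ⟨(x.1.1 ++ [s], x.1.2 ++ [t]), by simp [x.2]⟩
  map_add' _ _ := rfl
  map_smul' _ _ := rfl

/-- A subspace of `K^{M_{p×q}}` is recursively closed if it is stable under
all shift operators. -/
def RecClosed (p q : ℕ) (K : Type*) [Field K]
    (V : Submodule K (EqPair p q → K)) : Prop :=
  ∀ (s : Fin p) (t : Fin q), ∀ A ∈ V, shiftL p q K s t A ∈ V

/-- The recursive closure of `A`: the smallest recursively closed subspace
containing `A`. -/
def recClosure (p q : ℕ) (K : Type*) [Field K] (A : EqPair p q → K) :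
    Submodule K (EqPair p q → K) :=
  sInf {V | A ∈ V ∧ RecClosed p q K V}

/-- `A` is a recurrence matrix if its recursive closure is
finite-dimensional. -/
def IsRecMatrix (p q : ℕ) (K : Type*) [Field K] (A : EqPair p q → K) : Prop :=
  FiniteDimensional K (recClosure p q K A)

/-- The matrix product `(A·B)[U,W] = ∑_V A[U,V] B[V,W]`. -/
def matMul {p r q : ℕ} {K : Type*} [Field K]
    (A : EqPair p r → K) (B : EqPair r q → K) : EqPair p q → K :=
  fun x => ∑ V : Fin x.1.1.length → Fin r,
    A ⟨(x.1.1, List.ofFn V), by simp⟩ * B ⟨(List.ofFn V, x.1.2), by simp [x.2]⟩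

/-- The convolution product
`(A∗B)[U,W] = ∑_{(U,W)=(U₁,W₁)(U₂,W₂)} A[U₁,W₁] B[U₂,W₂]`; since the two
words have equal length, factorizations correspond to cut positions
`k = 0, …, l(U)`. -/
def convMul {p q : ℕ} {K : Type*} [Field K] (A B : EqPair p q → K) :
    EqPair p q → K :=
  fun x => ∑ k ∈ Finset.range (x.1.1.length + 1),
    A ⟨(x.1.1.take k, x.1.2.take k), by simp [x.2]⟩ *
      B ⟨(x.1.1.drop k, x.1.2.drop k), by simp [x.2]⟩

section Aux

variable {p q : ℕ} {K : Type*} [Field K]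

lemma eqPair_congr (a : EqPair p q → K) {u u' : List (Fin p)} {w w' : List (Fin q)}
    (h1 : u = u') (h2 : w = w') (hp : u.length = w.length) (hp' : u'.length = w'.length) :
    a ⟨(u, w), hp⟩ = a ⟨(u', w'), hp'⟩ := by subst h1; subst h2; rfl

/-- `convMul` as a bilinear map. -/
def convMulL : (EqPair p q → K) →ₗ[K] (EqPair p q → K) →ₗ[K] (EqPair p q → K) :=
  LinearMap.mk₂ K convMul
    (fun a a' b => funext fun x => by
      simp [convMul, Pi.add_apply, add_mul, Finset.sum_add_distrib]
      rw [← Finset.sum_add_distrib]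
      exact Finset.sum_congr rfl fun k _ => add_mul _ _ _)
    (fun c a b => funext fun x => by
      simp [convMul, Pi.smul_apply, Finset.mul_sum, mul_assoc]
      exact Finset.sum_congr rfl fun k _ => mul_assoc _ _ _)
    (fun a b b' => funext fun x => by
      simp [convMul, Pi.add_apply, mul_add, Finset.sum_add_distrib]
      rw [← Finset.sum_add_distrib]
      exact Finset.sum_congr rfl fun k _ => mul_add _ _ _)
    (fun c a b => funext fun x => by
      simp [convMul, Pi.smul_apply, Finset.mul_sum, mul_left_comm]
      exact Finset.sum_congr rfl fun k _ => mul_left_comm _ _ _)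

def emptyPair : EqPair p q := ⟨([], []), rfl⟩

/-- Leibniz-type identity for the shift of a convolution product. -/
lemma shift_convMul (s : Fin p) (t : Fin q) (a b : EqPair p q → K) :
    shiftL p q K s t (convMul a b)
      = b emptyPair • shiftL p q K s t a + convMul a (shiftL p q K s t b) := by
  funext x
  obtain ⟨⟨U, W⟩, h⟩ := x
  show (convMul a b) ⟨(U ++ [s], W ++ [t]), _⟩ = _
  have hlen : (U ++ [s]).length + 1 = (U.length + 1) + 1 := by simp
  simp only [convMul]
  rw [hlen, Finset.sum_range_succ]
  have hW : W.length = U.length := h.symm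
  have hlast : a ⟨((U ++ [s]).take (U.length + 1), (W ++ [t]).take (U.length + 1)),
        by simp [hW]⟩ *
      b ⟨((U ++ [s]).drop (U.length + 1), (W ++ [t]).drop (U.length + 1)), by simp [hW]⟩
      = b emptyPair * (shiftL p q K s t a) ⟨(U, W), h⟩ := by
    rw [mul_comm]
    refine congrArg₂ (· * ·) ?_ ?_
    · refine eqPair_congr b ?_ ?_ _ rfl
      · rw [List.drop_of_length_le (by simp)]
      · rw [List.drop_of_length_le (by simp [hW])]
    · exact eqPair_congr a
        (by rw [List.take_of_length_le (by simp)])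
        (by rw [List.take_of_length_le (by simp [hW])]) _ (by simp [hW])
  rw [hlast]
  have hrest : ∀ k ∈ Finset.range (U.length + 1),
      a ⟨((U ++ [s]).take k, (W ++ [t]).take k), by simp [h]⟩ *
        b ⟨((U ++ [s]).drop k, (W ++ [t]).drop k), by simp [h]⟩
      = a ⟨(U.take k, W.take k), by simp [h]⟩ *
        (shiftL p q K s t b) ⟨(U.drop k, W.drop k), by simp [h]⟩ := by
    intro k hk
    have hk' : k ≤ U.length := Nat.lt_succ_iff.mp (Finset.mem_range.mp hk)
    refine congrArg₂ (· * ·) ?_ ?_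
    · exact eqPair_congr a (List.take_append_of_le_length hk')
        (List.take_append_of_le_length (by omega)) _ _
    · exact eqPair_congr b (List.drop_append_of_le_length hk')
        (List.drop_append_of_le_length (by omega)) _ _
  rw [Finset.sum_congr rfl hrest]
  show _ = b emptyPair * (shiftL p q K s t a) ⟨(U, W), h⟩ +
    convMul a (shiftL p q K s t b) ⟨(U, W), h⟩
  rw [add_comm]
  rfl

lemma mem_recClosure_self (A : EqPair p q → K) : A ∈ recClosure p q K A :=
  Submodule.mem_sInf.mpr fun _ hV => hV.1

lemma recClosed_recClosure (A : EqPair p q → K) :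
    RecClosed p q K (recClosure p q K A) := fun s t x hx =>
  Submodule.mem_sInf.mpr fun V hV => hV.2 s t x (Submodule.mem_sInf.mp hx V hV)

end Aux

/-- The convolution product of two recurrence matrices is a recurrence
matrix. -/
theorem convMul_isRecMatrix {p q : ℕ} {K : Type*} [Field K]
    (A B : EqPair p q → K) (hA : IsRecMatrix p q K A)
    (hB : IsRecMatrix p q K B) :
    IsRecMatrix p q K (convMul A B) := by
  set VA := recClosure p q K A with hVA
  set VB := recClosure p q K B with hVB
  haveI : FiniteDimensional K VA := hA
  haveI : FiniteDimensional K VB := hB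
  set M := Submodule.map₂ (convMulL (p := p) (q := q) (K := K)) VA VB with hM
  haveI : FiniteDimensional K M := by
    obtain ⟨sA, hsA⟩ := (Submodule.fg_iff_finiteDimensional VA).mpr ‹_›
    obtain ⟨sB, hsB⟩ := (Submodule.fg_iff_finiteDimensional VB).mpr ‹_›
    rw [hM, ← hsA, ← hsB, Submodule.map₂_span_span]
    exact FiniteDimensional.span_of_finite K
      (Set.Finite.image2 _ sA.finite_toSet sB.finite_toSet)
  set Wsub := M ⊔ VA with hWsub
  haveI : FiniteDimensional K Wsub := Submodule.finiteDimensional_sup M VA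
  have hWclosed : RecClosed p q K Wsub := by
    intro s t x hx
    obtain ⟨y, hy, z, hz, rfl⟩ := Submodule.mem_sup.mp hx
    rw [map_add]
    refine Submodule.add_mem _ ?_
      (le_sup_right (α := Submodule K (EqPair p q → K))
        (recClosed_recClosure A s t z hz))
    have hmap : Submodule.map (shiftL p q K s t) M ≤ Wsub := by
      rw [hM, ← Submodule.span_eq VA, ← Submodule.span_eq VB,
        Submodule.map₂_span_span, Submodule.map_span, Submodule.span_le]
      rintro _ ⟨_, ⟨a, ha, b, hb, rfl⟩, rfl⟩
      show shiftL p q K s t (convMul a b) ∈ Wsub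
      rw [shift_convMul]
      refine Submodule.add_mem _ ?_ ?_
      · exact Submodule.smul_mem _ _
          (le_sup_right (α := Submodule K (EqPair p q → K))
            (recClosed_recClosure A s t a ha))
      · exact le_sup_left (α := Submodule K (EqPair p q → K))
          (Submodule.apply_mem_map₂ _ ha (recClosed_recClosure B s t b hb))
    exact hmap (Submodule.mem_map_of_mem hy)
  have hmem : convMul A B ∈ Wsub :=
    le_sup_left (α := Submodule K (EqPair p q → K))
      (Submodule.apply_mem_map₂ _ (mem_recClosure_self A) (mem_recClosure_self B))
  have hle : recClosure p q K (convMul A B) ≤ Wsub := sInf_le ⟨hmem, hWclosed⟩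
  exact Submodule.finiteDimensional_of_le hle
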